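/- Let Γ consist of Π₁ formulas and c an atom. Then Γ ⊢ c is derivable in minimal first-order logic iff there is ψ = ∀ȳ₁(σ₁ → ∀ȳ₂(σ₂ → ⋯ → ∀ȳ_k(σ_k → b)⋯)) in Γ and a substitution of variables x̄ for ȳ such that b[ȳ:=x̄] = c and, writing σᵢ = τ₁ⁱ → ⋯ → τ_{qᵢ}ⁱ → aᵢ, each judgment Γ, τ₁ⁱ[ȳ:=x̄], …, τ_{qᵢ}ⁱ[ȳ:=x̄] ⊢ aᵢ[ȳ:=x̄] is derivable. -/

import Mathlib

namespace MFOL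

/-- Formulas of minimal first-order logic (→ and ∀ only, no function symbols),
in de Bruijn representation; individual terms are just variables `ℕ`. -/
inductive Form where
  | atom : ℕ → List ℕ → Form
  | imp : Form → Form → Form
  | all : Form → Form
deriving DecidableEq

def upRen (σ : ℕ → ℕ) : ℕ → ℕ
  | 0 => 0
  | n + 1 => σ n + 1

/-- Capture-avoiding (simultaneous) substitution of variables for variables. -/
def substF : (ℕ → ℕ) → Form → Form
  | σ, .atom p args => .atom p (args.map σ)
  | σ, .imp a b => .imp (substF σ a) (substF σ b)
  | σ, .all a => .all (substF (upRen σ) a)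

/-- Substitution of the variable `x` for the outermost bound variable. -/
def subst0 (x : ℕ) : Form → Form :=
  substF (fun n => match n with | 0 => x | n + 1 => n)

def shiftF : Form → Form := substF Nat.succ

/-- Natural deduction for minimal first-order logic. -/
inductive Prv : Set Form → Form → Prop
  | ax {Γ : Set Form} {φ : Form} : φ ∈ Γ → Prv Γ φ
  | impI {Γ : Set Form} {φ ψ : Form} : Prv (insert φ Γ) ψ → Prv Γ (.imp φ ψ)
  | impE {Γ : Set Form} {φ ψ : Form} : Prv Γ (.imp φ ψ) → Prv Γ φ → Prv Γ ψ
  | allI {Γ : Set Form} {φ : Form} : Prv (shiftF '' Γ) φ → Prv Γ (.all φ)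
  | allE {Γ : Set Form} {φ : Form} (x : ℕ) : Prv Γ (.all φ) → Prv Γ (subst0 x φ)

mutual
  /-- The Σ₁ class of the Mints hierarchy: Σ₁ ::= a | Π₁ → Σ₁. -/
  inductive IsSigma1 : Form → Prop
    | atom (p : ℕ) (args : List ℕ) : IsSigma1 (.atom p args)
    | imp {τ σ : Form} : IsPi1 τ → IsSigma1 σ → IsSigma1 (.imp τ σ)
  /-- The Π₁ class of the Mints hierarchy: Π₁ ::= a | Σ₁ → Π₁ | ∀x.Π₁. -/
  inductive IsPi1 : Form → Prop
    | atom (p : ℕ) (args : List ℕ) : IsPi1 (.atom p args)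
    | imp {σ π : Form} : IsSigma1 σ → IsPi1 π → IsPi1 (.imp σ π)
    | all {π : Form} : IsPi1 π → IsPi1 (.all π)
end

def IsAtomF (f : Form) : Prop := ∃ p args, f = Form.atom p args

/-- Premises τ₁,…,τ_q of a Σ₁ formula τ₁ → ⋯ → τ_q → c. -/
def premsOf : Form → List Form
  | .imp a b => a :: premsOf b
  | .atom p args => []
  | .all a => []

/-- Target atom of a Σ₁ formula. -/
def targetOf : Form → Form
  | .imp _ b => targetOf b
  | f => f

/-- `Unfolds ψ prems b` : instantiating the ∀-blocks of the Π₁ formula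
`ψ = ∀ȳ₁(σ₁ → ∀ȳ₂(σ₂ → ⋯ → ∀ȳ_k(σ_k → b')⋯))` at some variables x̄
yields the list of (instantiated) premises `prems = [σ₁[ȳ:=x̄],…]` and
the (instantiated) target atom `b = b'[ȳ:=x̄]`. -/
inductive Unfolds : Form → List Form → Form → Prop
  | atom (p : ℕ) (args : List ℕ) : Unfolds (.atom p args) [] (.atom p args)
  | imp {σ ψ : Form} {prems : List Form} {b : Form} :
      Unfolds ψ prems b → Unfolds (.imp σ ψ) (σ :: prems) b
  | all {ψ : Form} {prems : List Form} {b : Form} (x : ℕ) :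
      Unfolds (subst0 x ψ) prems b → Unfolds (.all ψ) prems b

/-- `closedAt k φ`: all free de Bruijn indices of `φ` are `< k`. -/
def closedAt : ℕ → Form → Prop
  | k, .atom _ args => ∀ x ∈ args, x < k
  | k, .imp a b => closedAt k a ∧ closedAt k b
  | k, .all a => closedAt (k + 1) a

set_option linter.unusedVariables false

-- ============ auxiliary development ============

def scons (x : ℕ) (ρ : ℕ → ℕ) : ℕ → ℕ
  | 0 => x
  | n + 1 => ρ n

theorem weaken : ∀ {Δ : Set Form} {φ : Form}, Prv Δ φ →
    ∀ {Δ' : Set Form}, Δ ⊆ Δ' → Prv Δ' φ := by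
  intro Δ φ h
  induction h with
  | ax hm => intro Δ' hs; exact Prv.ax (hs hm)
  | impI _ ih => intro Δ' hs; exact Prv.impI (ih (Set.insert_subset_insert hs))
  | impE _ _ ih1 ih2 => intro Δ' hs; exact Prv.impE (ih1 hs) (ih2 hs)
  | allI _ ih => intro Δ' hs; exact Prv.allI (ih (Set.image_mono hs))
  | allE x _ ih => intro Δ' hs; exact Prv.allE x (ih hs)

theorem upRen_comp (σ τ : ℕ → ℕ) : upRen σ ∘ upRen τ = upRen (σ ∘ τ) := by
  funext n; cases n <;> rfl

theorem substF_comp (σ τ : ℕ → ℕ) (f : Form) :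
    substF σ (substF τ f) = substF (σ ∘ τ) f := by
  induction f generalizing σ τ with
  | atom p args => simp [substF, List.map_map]
  | imp a b iha ihb => simp [substF, iha, ihb]
  | all a ih => simp [substF, ih, upRen_comp]

theorem upRen_id : upRen id = id := by funext n; cases n <;> rfl

theorem substF_id (f : Form) : substF id f = f := by
  induction f with
  | atom p args => simp [substF]
  | imp a b iha ihb => simp [substF, iha, ihb]
  | all a ih => simp [substF, upRen_id, ih]

/-- Neutral derivability: the shape of the right-hand side of the theorem. -/
def NE (Δ : Set Form) (c : Form) : Prop :=
  ∃ ψ ∈ Δ, ∃ prems : List Form,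
    Unfolds ψ prems c ∧ ∀ σ ∈ prems, Prv (Δ ∪ {τ | τ ∈ premsOf σ}) (targetOf σ)

theorem NE_mono {Δ Δ' : Set Form} {c : Form} (hs : Δ ⊆ Δ') (h : NE Δ c) : NE Δ' c := by
  obtain ⟨ψ, hψ, prems, u, hc⟩ := h
  exact ⟨ψ, hs hψ, prems, u, fun σ hσ =>
    weaken (hc σ hσ) (Set.union_subset_union_left _ hs)⟩

/-- Kripke forcing over worlds = contexts. -/
def Force : Set Form → (ℕ → ℕ) → Form → Prop
  | w, ρ, .atom p args => NE w (.atom p (args.map ρ))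
  | w, ρ, .imp a b => ∀ w', w ⊆ w' → Force w' ρ a → Force w' ρ b
  | w, ρ, .all a => ∀ x, Force w (scons x ρ) a

theorem scons_upRen (x : ℕ) (ρ σ : ℕ → ℕ) :
    scons x ρ ∘ upRen σ = scons x (ρ ∘ σ) := by
  funext n; cases n <;> rfl

theorem Force_subst (f : Form) : ∀ (w : Set Form) (ρ σ : ℕ → ℕ),
    Force w ρ (substF σ f) ↔ Force w (ρ ∘ σ) f := by
  induction f with
  | atom p args => intro w ρ σ; simp [substF, Force, List.map_map]
  | imp a b iha ihb =>
    intro w ρ σ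
    simp only [substF, Force]
    constructor
    · intro h w' hs ha; exact (ihb w' ρ σ).mp (h w' hs ((iha w' ρ σ).mpr ha))
    · intro h w' hs ha; exact (ihb w' ρ σ).mpr (h w' hs ((iha w' ρ σ).mp ha))
  | all a ih =>
    intro w ρ σ
    simp only [substF, Force]
    constructor
    · intro h x
      have := (ih w (scons x ρ) (upRen σ)).mp (h x)
      rwa [scons_upRen] at this
    · intro h x
      apply (ih w (scons x ρ) (upRen σ)).mpr
      rw [scons_upRen]; exact h x

theorem Force_mono (f : Form) : ∀ {w w' : Set Form} (ρ : ℕ → ℕ),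
    w ⊆ w' → Force w ρ f → Force w' ρ f := by
  induction f with
  | atom p args => intro w w' ρ hs h; exact NE_mono hs h
  | imp a b iha ihb =>
    intro w w' ρ hs h w'' hs' ha
    exact h w'' (hs.trans hs') ha
  | all a ih => intro w w' ρ hs h x; exact ih _ hs (h x)

theorem scons_comp (x : ℕ) (ρ : ℕ → ℕ) :
    (ρ ∘ fun n => match n with | 0 => x | n + 1 => n) = scons (ρ x) ρ := by
  funext n; cases n <;> rfl

theorem sound : ∀ {Δ : Set Form} {φ : Form}, Prv Δ φ →
    ∀ (w : Set Form) (ρ : ℕ → ℕ), (∀ γ ∈ Δ, Force w ρ γ) → Force w ρ φ := by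
  intro Δ φ h
  induction h with
  | ax hm => intro w ρ hΔ; exact hΔ _ hm
  | @impI Δ a b _ ih =>
    intro w ρ hΔ
    intro w' hs ha
    apply ih w' ρ
    intro γ hγ
    rcases hγ with rfl | hγ
    · exact ha
    · exact Force_mono γ ρ hs (hΔ γ hγ)
  | impE _ _ ih1 ih2 =>
    intro w ρ hΔ
    exact ih1 w ρ hΔ w (le_refl _) (ih2 w ρ hΔ)
  | @allI Δ a _ ih =>
    intro w ρ hΔ x
    apply ih w (scons x ρ)
    rintro γ' ⟨γ, hγ, rfl⟩
    have : Force w (scons x ρ) (shiftF γ) ↔ Force w (scons x ρ ∘ Nat.succ) γ :=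
      Force_subst γ w (scons x ρ) Nat.succ
    rw [show (scons x ρ ∘ Nat.succ) = ρ from funext fun n => rfl] at this
    exact this.mpr (hΔ γ hγ)
  | @allE Δ a x _ ih =>
    intro w ρ hΔ
    have h := ih w ρ hΔ (ρ x)
    have hiff := Force_subst a w ρ (fun n => match n with | 0 => x | n + 1 => n)
    rw [scons_comp] at hiff
    exact hiff.mpr h

theorem NE_prv_aux : ∀ {ψ : Form} {prems : List Form} {b : Form},
    Unfolds ψ prems b → ∀ {Δ : Set Form}, Prv Δ ψ →
    (∀ σ ∈ prems, Prv Δ σ) → Prv Δ b := by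
  intro ψ prems b u
  induction u with
  | atom p args => intro Δ h _; exact h
  | @imp σ ψ' prems' b' _ ih =>
    intro Δ h hc
    exact ih (Prv.impE h (hc σ (List.mem_cons_self))) fun τ hτ =>
      hc τ (List.mem_cons_of_mem _ hτ)
  | all x _ ih =>
    intro Δ h hc
    exact ih (Prv.allE x h) hc

theorem prems_intro : ∀ (σ : Form) (Δ : Set Form),
    Prv (Δ ∪ {τ | τ ∈ premsOf σ}) (targetOf σ) → Prv Δ σ := by
  intro σ
  induction σ with
  | atom p args =>
    intro Δ h
    refine weaken h ?_
    rintro x (hx | hx)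
    · exact hx
    · simp [premsOf] at hx
  | imp a b _ ihb =>
    intro Δ h
    apply Prv.impI
    apply ihb
    refine weaken h ?_
    rintro x (hx | hx)
    · exact Or.inl (Set.mem_insert_of_mem _ hx)
    · simp only [premsOf, Set.mem_setOf_eq, List.mem_cons] at hx
      rcases hx with rfl | hx
      · exact Or.inl (Set.mem_insert _ _)
      · exact Or.inr hx
  | all a _ =>
    intro Δ h
    refine weaken h ?_
    rintro x (hx | hx)
    · exact hx
    · simp [premsOf] at hx

theorem NE_prv {Δ : Set Form} {c : Form} (h : NE Δ c) : Prv Δ c := by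
  obtain ⟨ψ, hψ, prems, u, hc⟩ := h
  exact NE_prv_aux u (Prv.ax hψ) fun σ hσ => prems_intro σ Δ (hc σ hσ)

mutual
theorem reflectPi : ∀ (π : Form), IsPi1 π → ∀ (ρ : ℕ → ℕ) (Δ : Set Form),
    (∀ Δ', Δ ⊆ Δ' → ∀ (prems : List Form) (b : Form), Unfolds (substF ρ π) prems b →
      (∀ σ ∈ prems, Prv (Δ' ∪ {τ | τ ∈ premsOf σ}) (targetOf σ)) → NE Δ' b) →
    Force Δ ρ π
  | .atom p args, _, ρ, Δ, H => by
      show NE Δ (.atom p (args.map ρ))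
      exact H Δ (le_refl _) [] _ (Unfolds.atom p (args.map ρ)) (by simp)
  | .imp σ π, h, ρ, Δ, H => by
      have hσ : IsSigma1 σ := by cases h with | imp a b => exact a
      have hπ : IsPi1 π := by cases h with | imp a b => exact b
      intro Δ' hsub hfσ
      apply reflectPi π hπ ρ Δ'
      intro Δ'' hsub' prems b u conds
      have hprv : Prv (Δ'' ∪ {τ | τ ∈ premsOf (substF ρ σ)}) (targetOf (substF ρ σ)) :=
        reifySigma σ hσ ρ Δ'' (Force_mono σ ρ hsub' hfσ)
      refine H Δ'' (hsub.trans hsub') _ b (Unfolds.imp u) ?_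
      intro τ hτ
      rcases List.mem_cons.mp hτ with rfl | hτ
      · exact hprv
      · exact conds τ hτ
  | .all π, h, ρ, Δ, H => by
      have hπ : IsPi1 π := by cases h with | all a => exact a
      intro x
      apply reflectPi π hπ (scons x ρ) Δ
      intro Δ' hs prems b u conds
      have key : substF (scons x ρ) π =
          subst0 x (substF (upRen ρ) π) := by
        unfold subst0
        rw [substF_comp]
        congr 1
        funext n; cases n <;> rfl
      rw [key] at u
      exact H Δ' hs prems b (Unfolds.all x u) conds
theorem reifySigma : ∀ (σ : Form), IsSigma1 σ → ∀ (ρ : ℕ → ℕ) (Δ : Set Form),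
    Force Δ ρ σ → Prv (Δ ∪ {τ | τ ∈ premsOf (substF ρ σ)}) (targetOf (substF ρ σ))
  | .atom p args, _, ρ, Δ, hf => by
      have h : NE Δ (.atom p (args.map ρ)) := hf
      refine weaken (NE_prv h) Set.subset_union_left
  | .imp τ σ', h, ρ, Δ, hf => by
      have hτ : IsPi1 τ := by cases h with | imp a b => exact a
      have hσ' : IsSigma1 σ' := by cases h with | imp a b => exact b
      have hτforce : Force (insert (substF ρ τ) Δ) ρ τ := by
        apply reflectPi τ hτ ρ _
        intro Δ'' hsub prems b u conds
        exact ⟨substF ρ τ, hsub (Set.mem_insert _ _), prems, u, conds⟩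
      have hfσ' : Force (insert (substF ρ τ) Δ) ρ σ' :=
        hf _ (Set.subset_insert _ _) hτforce
      have ih := reifySigma σ' hσ' ρ (insert (substF ρ τ) Δ) hfσ'
      refine weaken ih ?_
      rintro x (hx | hx)
      · rcases hx with rfl | hx
        · exact Or.inr (by simp [substF, premsOf])
        · exact Or.inl hx
      · refine Or.inr ?_
        simp only [substF, premsOf, Set.mem_setOf_eq, List.mem_cons]
        exact Or.inr hx
  | .all a, h, ρ, Δ, hf => by cases h
end

theorem generation (Γ : Set Form) (hΓ : ∀ ψ ∈ Γ, IsPi1 ψ)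
    (p : ℕ) (args : List ℕ) :
    Prv Γ (.atom p args) ↔ NE Γ (.atom p args) := by
  constructor
  · intro h
    have key := sound h Γ id ?_
    · have : Force Γ id (.atom p args) = NE Γ (.atom p (args.map id)) := rfl
      rw [this, List.map_id] at key
      exact key
    · intro γ hγ
      apply reflectPi γ (hΓ γ hγ) id Γ
      intro Δ' hs prems b u conds
      rw [substF_id] at u
      exact ⟨γ, hs hγ, prems, u, conds⟩
  · exact NE_prv

end MFOL

/-- Generation lemma: for Γ consisting of Π₁ formulas and an atom c, `Γ ⊢ c`
iff some ψ ∈ Γ unfolds (by instantiating its ∀-blocks at variables x̄) to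
premises σ₁,…,σ_k and target c, and for each σᵢ = τ₁ⁱ → ⋯ → τ_{qᵢ}ⁱ → aᵢ the
judgment `Γ, τ₁ⁱ, …, τ_{qᵢ}ⁱ ⊢ aᵢ` is derivable. -/
theorem stmt6 (Γ : Set MFOL.Form) (hΓ : ∀ ψ ∈ Γ, MFOL.IsPi1 ψ)
    (p : ℕ) (args : List ℕ) :
    MFOL.Prv Γ (.atom p args) ↔
      ∃ ψ ∈ Γ, ∃ prems : List MFOL.Form,
        MFOL.Unfolds ψ prems (.atom p args) ∧
        ∀ σ ∈ prems,
          MFOL.Prv (Γ ∪ {τ | τ ∈ MFOL.premsOf σ}) (MFOL.targetOf σ) := by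
  exact MFOL.generation Γ hΓ p args
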